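/- Let d = 2 and let Q ⊆ ℝ^η × ℝ × ℝ^2 be the set of (x, y, z) with x ∈ [L, U], z ∈ Δ^2, satisfying: y ≥ w^k · x + b^k for k = 1, 2; y ≤ w^ℓ · x + Σ_{k=1}^2 (N^{ℓ,k} + b^k) z_k for ℓ = 1, 2, where N^{ℓ,k} = Σ_{i=1}^η max{(w^k_i − w^ℓ_i) L_i, (w^k_i − w^ℓ_i) U_i}; and, for every mapping I : {1,…,η} → {1, 2}, y ≤ Σ_{i=1}^η ( w^{I(i)}_i x_i + Σ_{k=1}^2 max{(w^k_i − w^{I(i)}_i) L_i, (w^k_i − w^{I(i)}_i) U_i} z_k ) + Σ_{k=1}^2 b^k z_k. Then this formulation is ideal: every extreme point (x, y, z) of Q satisfies z ∈ {0,1}^2. -/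

import Mathlib

noncomputable section

/-- Dot product on `Fin n → ℝ`. -/
def dotp {n : ℕ} (w x : Fin n → ℝ) : ℝ := ∑ i, w i * x i

lemma mul_le_max' (u s LL UU : ℝ) (h1 : LL ≤ s) (h2 : s ≤ UU) :
    u * s ≤ max (u * LL) (u * UU) := by
  rcases le_total 0 u with hu | hu
  · exact le_max_of_le_right (mul_le_mul_of_nonneg_left h2 hu)
  · exact le_max_of_le_left (mul_le_mul_of_nonpos_left h1 hu)

lemma key1 (w0 w1 xx LL UU t : ℝ) (h1 : LL ≤ UU) (h2 : LL ≤ xx) (h3 : xx ≤ UU)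
    (ht0 : 0 < t) (ht1 : t < 1) :
    ∃ A C : ℝ, (LL ≤ A ∧ A ≤ UU) ∧ (LL ≤ C ∧ C ≤ UU) ∧ xx = t * A + (1 - t) * C ∧
      t * (w0 * A) + (1 - t) * (w1 * C)
        = min (w0 * xx + max ((w1 - w0) * LL) ((w1 - w0) * UU) * (1 - t))
              (w1 * xx + max ((w0 - w1) * LL) ((w0 - w1) * UU) * t) := by
  have ht1' : (0:ℝ) < 1 - t := by linarith
  rcases le_total 0 (w0 - w1) with hv | hv
  · rcases le_total (t * UU) (xx - (1 - t) * LL) with h | h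
    · refine ⟨UU, (xx - t * UU) / (1 - t), ⟨h1, le_refl _⟩, ⟨?_, ?_⟩, ?_, ?_⟩
      · rw [le_div_iff₀ ht1']; nlinarith
      · rw [div_le_iff₀ ht1']; nlinarith
      · field_simp; ring
      · rw [max_eq_left (by nlinarith : (w1 - w0) * UU ≤ (w1 - w0) * LL),
            max_eq_right (by nlinarith : (w0 - w1) * LL ≤ (w0 - w1) * UU),
            min_eq_right (by nlinarith : w1 * xx + (w0 - w1) * UU * t ≤ w0 * xx + (w1 - w0) * LL * (1 - t))]
        field_simp; ring
    · refine ⟨(xx - (1 - t) * LL) / t, LL, ⟨?_, ?_⟩, ⟨le_refl _, h1⟩, ?_, ?_⟩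
      · rw [le_div_iff₀ ht0]; nlinarith
      · rw [div_le_iff₀ ht0]; nlinarith
      · field_simp; ring
      · rw [max_eq_left (by nlinarith : (w1 - w0) * UU ≤ (w1 - w0) * LL),
            max_eq_right (by nlinarith : (w0 - w1) * LL ≤ (w0 - w1) * UU),
            min_eq_left (by nlinarith : w0 * xx + (w1 - w0) * LL * (1 - t) ≤ w1 * xx + (w0 - w1) * UU * t)]
        field_simp; ring
  · rcases le_total (xx - (1 - t) * UU) (t * LL) with h | h
    · refine ⟨LL, (xx - t * LL) / (1 - t), ⟨le_refl _, h1⟩, ⟨?_, ?_⟩, ?_, ?_⟩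
      · rw [le_div_iff₀ ht1']; nlinarith
      · rw [div_le_iff₀ ht1']; nlinarith
      · field_simp; ring
      · rw [max_eq_right (by nlinarith : (w1 - w0) * LL ≤ (w1 - w0) * UU),
            max_eq_left (by nlinarith : (w0 - w1) * UU ≤ (w0 - w1) * LL),
            min_eq_right (by nlinarith : w1 * xx + (w0 - w1) * LL * t ≤ w0 * xx + (w1 - w0) * UU * (1 - t))]
        field_simp; ring
    · refine ⟨(xx - (1 - t) * UU) / t, UU, ⟨?_, ?_⟩, ⟨h1, le_refl _⟩, ?_, ?_⟩
      · rw [le_div_iff₀ ht0]; nlinarith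
      · rw [div_le_iff₀ ht0]; nlinarith
      · field_simp; ring
      · rw [max_eq_right (by nlinarith : (w1 - w0) * LL ≤ (w1 - w0) * UU),
            max_eq_left (by nlinarith : (w0 - w1) * UU ≤ (w0 - w1) * LL),
            min_eq_left (by nlinarith : w0 * xx + (w1 - w0) * UU * (1 - t) ≤ w1 * xx + (w0 - w1) * LL * t)]
        field_simp; ring

lemma decomp {η : ℕ} (w : Fin 2 → Fin η → ℝ) (b : Fin 2 → ℝ) (L U x : Fin η → ℝ)
    (hLU : ∀ i, L i ≤ U i) (hx : ∀ i, L i ≤ x i ∧ x i ≤ U i)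
    (t y : ℝ) (ht0 : 0 < t) (ht1 : t < 1)
    (hy0 : dotp (w 0) x + b 0 ≤ y) (hy1 : dotp (w 1) x + b 1 ≤ y)
    (hI : ∀ I : Fin η → Fin 2, y ≤ ∑ i, (w (I i) i * x i
        + (max ((w 0 i - w (I i) i) * L i) ((w 0 i - w (I i) i) * U i) * t
          + max ((w 1 i - w (I i) i) * L i) ((w 1 i - w (I i) i) * U i) * (1 - t)))
      + (b 0 * t + b 1 * (1 - t))) :
    ∃ a c : Fin η → ℝ, (∀ i, L i ≤ a i ∧ a i ≤ U i) ∧ (∀ i, L i ≤ c i ∧ c i ≤ U i)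
      ∧ (∀ i, x i = t * a i + (1 - t) * c i)
      ∧ t * (dotp (w 0) a + b 0) + (1 - t) * (dotp (w 1) c + b 1) = y := by
  choose A C hA hC hxd hkey using fun i =>
    key1 (w 0 i) (w 1 i) (x i) (L i) (U i) t (hLU i) (hx i).1 (hx i).2 ht0 ht1
  have hT : ∀ i : Fin η, t * (w 0 i * A i) + (1 - t) * (w 1 i * C i)
      = min (w 0 i * x i + max ((w 1 i - w 0 i) * L i) ((w 1 i - w 0 i) * U i) * (1 - t))
            (w 1 i * x i + max ((w 0 i - w 1 i) * L i) ((w 0 i - w 1 i) * U i) * t) := hkey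
  set ST : ℝ := ∑ i, min (w 0 i * x i + max ((w 1 i - w 0 i) * L i) ((w 1 i - w 0 i) * U i) * (1 - t))
            (w 1 i * x i + max ((w 0 i - w 1 i) * L i) ((w 0 i - w 1 i) * U i) * t) with hSTdef
  set SG : ℝ := ∑ i, (t * (w 0 i * x i) + (1 - t) * (w 1 i * x i)) with hSGdef
  have hS0 : SG + (b 0 * t + b 1 * (1 - t)) ≤ y := by
    have e : SG + (b 0 * t + b 1 * (1 - t))
        = t * (dotp (w 0) x + b 0) + (1 - t) * (dotp (w 1) x + b 1) := by
      rw [hSGdef, Finset.sum_add_distrib, ← Finset.mul_sum, ← Finset.mul_sum]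
      unfold dotp; ring
    rw [e]
    nlinarith [mul_le_mul_of_nonneg_left hy0 ht0.le,
      mul_le_mul_of_nonneg_left hy1 (by linarith : (0:ℝ) ≤ 1 - t)]
  have hS1 : y ≤ ST + (b 0 * t + b 1 * (1 - t)) := by
    set Istar : Fin η → Fin 2 := fun i =>
      if w 0 i * x i + max ((w 1 i - w 0 i) * L i) ((w 1 i - w 0 i) * U i) * (1 - t)
        ≤ w 1 i * x i + max ((w 0 i - w 1 i) * L i) ((w 0 i - w 1 i) * U i) * t
      then 0 else 1 with hIstar
    refine (hI Istar).trans (le_of_eq ?_)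
    rw [hSTdef]
    congr 1
    refine Finset.sum_congr rfl fun i _ => ?_
    by_cases hcond : w 0 i * x i + max ((w 1 i - w 0 i) * L i) ((w 1 i - w 0 i) * U i) * (1 - t)
        ≤ w 1 i * x i + max ((w 0 i - w 1 i) * L i) ((w 0 i - w 1 i) * U i) * t
    · have hi : Istar i = 0 := by rw [hIstar]; simp [hcond]
      rw [hi]
      simp only [sub_self, zero_mul, max_self]
      rw [min_eq_left hcond]; ring
    · have hi : Istar i = 1 := by rw [hIstar]; simp [hcond]
      rw [hi]
      simp only [sub_self, zero_mul, max_self]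
      rw [min_eq_right (le_of_not_ge hcond)]; ring
  rcases eq_or_lt_of_le (hS0.trans hS1) with heq | hlt
  · refine ⟨x, x, hx, hx, fun i => by ring, ?_⟩
    have hy : SG + (b 0 * t + b 1 * (1 - t)) = y := by linarith
    have e : SG + (b 0 * t + b 1 * (1 - t))
        = t * (dotp (w 0) x + b 0) + (1 - t) * (dotp (w 1) x + b 1) := by
      rw [hSGdef, Finset.sum_add_distrib, ← Finset.mul_sum, ← Finset.mul_sum]
      unfold dotp; ring
    linarith [e ▸ hy]
  · have hlt' : SG < ST := by linarith
    set θ : ℝ := (y - (SG + (b 0 * t + b 1 * (1 - t)))) / (ST - SG) with hθdef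
    have hne : ST - SG ≠ 0 := sub_ne_zero.2 hlt'.ne'
    have hθ0 : 0 ≤ θ := div_nonneg (by linarith) (by linarith)
    have hθ1 : θ ≤ 1 := by
      rw [hθdef, div_le_one (by linarith)]; linarith
    refine ⟨fun i => (1 - θ) * x i + θ * A i, fun i => (1 - θ) * x i + θ * C i, ?_, ?_, ?_, ?_⟩
    · intro i
      constructor
      · show L i ≤ (1 - θ) * x i + θ * A i
        nlinarith [(hA i).1, (hx i).1]
      · show (1 - θ) * x i + θ * A i ≤ U i
        nlinarith [(hA i).2, (hx i).2]
    · intro i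
      constructor
      · show L i ≤ (1 - θ) * x i + θ * C i
        nlinarith [(hC i).1, (hx i).1]
      · show (1 - θ) * x i + θ * C i ≤ U i
        nlinarith [(hC i).2, (hx i).2]
    · intro i; linear_combination θ * (hxd i)
    · have hsum : ∑ i, (t * (w 0 i * ((1 - θ) * x i + θ * A i))
            + (1 - t) * (w 1 i * ((1 - θ) * x i + θ * C i)))
          = (1 - θ) * SG + θ * ST := by
        rw [hSGdef, hSTdef, Finset.mul_sum, Finset.mul_sum, ← Finset.sum_add_distrib]
        exact Finset.sum_congr rfl fun i _ => by linear_combination θ * (hT i)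
      have e1 : t * (dotp (w 0) (fun i => (1 - θ) * x i + θ * A i) + b 0)
            + (1 - t) * (dotp (w 1) (fun i => (1 - θ) * x i + θ * C i) + b 1)
          = ∑ i, (t * (w 0 i * ((1 - θ) * x i + θ * A i))
            + (1 - t) * (w 1 i * ((1 - θ) * x i + θ * C i))) + (b 0 * t + b 1 * (1 - t)) := by
        rw [Finset.sum_add_distrib, ← Finset.mul_sum, ← Finset.mul_sum]
        unfold dotp; ring
      rw [e1, hsum]
      have hθeq : θ * (ST - SG) = y - (SG + (b 0 * t + b 1 * (1 - t))) :=
        div_mul_cancel₀ _ hne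
      linear_combination hθeq

lemma dot_diff_le {η : ℕ} (u L U a : Fin η → ℝ) (ha : ∀ i, L i ≤ a i ∧ a i ≤ U i) :
    dotp u a ≤ ∑ i, max (u i * L i) (u i * U i) := by
  unfold dotp
  exact Finset.sum_le_sum fun i _ => mul_le_max' (u i) (a i) (L i) (U i) (ha i).1 (ha i).2

theorem stmt17 {η : ℕ} (hη : 1 ≤ η)
    (w : Fin 2 → Fin η → ℝ) (b : Fin 2 → ℝ)
    (L U : Fin η → ℝ) (hLU : ∀ i, L i ≤ U i)
    (hirr : ∀ k : Fin 2, ∃ x : Fin η → ℝ, (∀ i, L i ≤ x i ∧ x i ≤ U i) ∧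
      ∀ ℓ, ℓ ≠ k → dotp (w ℓ) x + b ℓ < dotp (w k) x + b k)
    (Q : Set ((Fin η → ℝ) × ℝ × (Fin 2 → ℝ)))
    (hQ : Q = {p | (∀ i, L i ≤ p.1 i ∧ p.1 i ≤ U i) ∧ p.2.2 ∈ stdSimplex ℝ (Fin 2)
      ∧ (∀ k, dotp (w k) p.1 + b k ≤ p.2.1)
      ∧ (∀ ℓ, p.2.1 ≤ dotp (w ℓ) p.1
          + ∑ k, ((∑ i, max ((w k i - w ℓ i) * L i) ((w k i - w ℓ i) * U i)) + b k) * p.2.2 k)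
      ∧ (∀ I : Fin η → Fin 2, p.2.1 ≤
          ∑ i, (w (I i) i * p.1 i
            + ∑ k, max ((w k i - w (I i) i) * L i) ((w k i - w (I i) i) * U i) * p.2.2 k)
          + ∑ k, b k * p.2.2 k)}) :
    -- the formulation is ideal: every extreme point has binary z
    ∀ p ∈ Set.extremePoints ℝ Q, ∀ k, p.2.2 k = 0 ∨ p.2.2 k = 1 := by
  intro p hp
  obtain ⟨hpQ, hext⟩ := hp
  have hmem := hpQ
  rw [hQ] at hmem
  obtain ⟨hbox, hsimp, hlb, hub, hImain⟩ := hmem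
  have hz0 : 0 ≤ p.2.2 0 := hsimp.1 0
  have hz1 : 0 ≤ p.2.2 1 := hsimp.1 1
  have hzsum : p.2.2 0 + p.2.2 1 = 1 := by
    have := hsimp.2
    rwa [Fin.sum_univ_two] at this
  have key : p.2.2 0 = 0 ∨ p.2.2 0 = 1 := by
    by_contra hcon
    push_neg at hcon
    obtain ⟨hne0, hne1⟩ := hcon
    set t : ℝ := p.2.2 0 with htdef
    have ht0 : 0 < t := lt_of_le_of_ne hz0 (Ne.symm hne0)
    have ht1 : t < 1 := lt_of_le_of_ne (by linarith) hne1
    have hz1eq : p.2.2 1 = 1 - t := by linarith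
    -- convert the multi-index constraints
    have hI' : ∀ I : Fin η → Fin 2, p.2.1 ≤ ∑ i, (w (I i) i * p.1 i
        + (max ((w 0 i - w (I i) i) * L i) ((w 0 i - w (I i) i) * U i) * t
          + max ((w 1 i - w (I i) i) * L i) ((w 1 i - w (I i) i) * U i) * (1 - t)))
      + (b 0 * t + b 1 * (1 - t)) := by
      intro I
      have h := hImain I
      simpa [Fin.sum_univ_two, hz1eq] using h
    obtain ⟨a, c, ha, hc, hxd, hO⟩ := decomp w b L U p.1 hLU hbox t p.2.1 ht0 ht1
      (hlb 0) (hlb 1) hI'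
    -- dot product decompositions
    have hd0 : dotp (w 0) p.1 = t * dotp (w 0) a + (1 - t) * dotp (w 0) c := by
      unfold dotp
      rw [Finset.mul_sum, Finset.mul_sum, ← Finset.sum_add_distrib]
      exact Finset.sum_congr rfl fun i _ => by rw [hxd i]; ring
    have hd1 : dotp (w 1) p.1 = t * dotp (w 1) a + (1 - t) * dotp (w 1) c := by
      unfold dotp
      rw [Finset.mul_sum, Finset.mul_sum, ← Finset.sum_add_distrib]
      exact Finset.sum_congr rfl fun i _ => by rw [hxd i]; ring
    -- side conditions
    have hside1 : dotp (w 1) a + b 1 ≤ dotp (w 0) a + b 0 := by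
      have h1 := hlb 1
      rw [hd1] at h1
      have h2 : t * (dotp (w 1) a + b 1) ≤ t * (dotp (w 0) a + b 0) := by linarith
      exact le_of_mul_le_mul_left h2 ht0
    have hside0 : dotp (w 0) c + b 0 ≤ dotp (w 1) c + b 1 := by
      have h1 := hlb 0
      rw [hd0] at h1
      have h2 : (1 - t) * (dotp (w 0) c + b 0) ≤ (1 - t) * (dotp (w 1) c + b 1) := by linarith
      exact le_of_mul_le_mul_left h2 (by linarith)
    -- endpoints
    set z1 : Fin 2 → ℝ := fun j => if j = 0 then 1 else 0 with hz1def
    set z2 : Fin 2 → ℝ := fun j => if j = 0 then 0 else 1 with hz2def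
    set q1 : (Fin η → ℝ) × ℝ × (Fin 2 → ℝ) := (a, dotp (w 0) a + b 0, z1) with hq1def
    set q2 : (Fin η → ℝ) × ℝ × (Fin 2 → ℝ) := (c, dotp (w 1) c + b 1, z2) with hq2def
    have hq1 : q1 ∈ Q := by
      rw [hQ]
      refine ⟨ha, ⟨fun j => by fin_cases j <;> simp [q1, z1], by simp [Fin.sum_univ_two, q1, z1]⟩,
        ?_, ?_, ?_⟩
      · intro k
        fin_cases k
        · simp [q1]
        · simpa [q1] using hside1
      · intro ℓ
        have hda := dot_diff_le (fun i => w 0 i - w ℓ i) L U a ha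
        have hrw : dotp (fun i => w 0 i - w ℓ i) a = dotp (w 0) a - dotp (w ℓ) a := by
          unfold dotp; rw [← Finset.sum_sub_distrib]
          exact Finset.sum_congr rfl fun i _ => by ring
        rw [hrw] at hda
        simp only [q1, z1, Fin.sum_univ_two]
        norm_num
        linarith
      · intro I
        have hda := dot_diff_le (fun i => w 0 i - w (I i) i) L U a ha
        have hrw : dotp (fun i => w 0 i - w (I i) i) a
            = dotp (w 0) a - ∑ i, w (I i) i * a i := by
          unfold dotp; rw [← Finset.sum_sub_distrib]
          exact Finset.sum_congr rfl fun i _ => by ring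
        rw [hrw] at hda
        simp only [q1, z1, Fin.sum_univ_two]
        norm_num
        rw [Finset.sum_add_distrib]
        linarith
    have hq2mem : q2 ∈ Q := by
      rw [hQ]
      refine ⟨hc, ⟨fun j => by fin_cases j <;> simp [q2, z2], by simp [Fin.sum_univ_two, q2, z2]⟩,
        ?_, ?_, ?_⟩
      · intro k
        fin_cases k
        · simpa [q2] using hside0
        · simp [q2]
      · intro ℓ
        have hdc := dot_diff_le (fun i => w 1 i - w ℓ i) L U c hc
        have hrw : dotp (fun i => w 1 i - w ℓ i) c = dotp (w 1) c - dotp (w ℓ) c := by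
          unfold dotp; rw [← Finset.sum_sub_distrib]
          exact Finset.sum_congr rfl fun i _ => by ring
        rw [hrw] at hdc
        simp only [q2, z2, Fin.sum_univ_two]
        norm_num
        linarith
      · intro I
        have hdc := dot_diff_le (fun i => w 1 i - w (I i) i) L U c hc
        have hrw : dotp (fun i => w 1 i - w (I i) i) c
            = dotp (w 1) c - ∑ i, w (I i) i * c i := by
          unfold dotp; rw [← Finset.sum_sub_distrib]
          exact Finset.sum_congr rfl fun i _ => by ring
        rw [hrw] at hdc
        simp only [q2, z2, Fin.sum_univ_two]
        norm_num
        rw [Finset.sum_add_distrib]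
        linarith
    -- p on the open segment
    have hseg : p ∈ openSegment ℝ q1 q2 := by
      refine ⟨t, 1 - t, ht0, by linarith, by ring, ?_⟩
      have hx : t • q1.1 + (1 - t) • q2.1 = p.1 := by
        funext i
        simp only [q1, q2, Pi.add_apply, Pi.smul_apply, smul_eq_mul]
        rw [hxd i]
      have hy : t • q1.2.1 + (1 - t) • q2.2.1 = p.2.1 := by
        simpa [q1, q2] using hO
      have hz : t • q1.2.2 + (1 - t) • q2.2.2 = p.2.2 := by
        funext j
        fin_cases j
        · simp [q1, q2, z1, z2, htdef]
        · simp [q1, q2, z1, z2, hz1eq]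
      calc t • q1 + (1 - t) • q2
          = (t • q1.1 + (1 - t) • q2.1, t • q1.2.1 + (1 - t) • q2.2.1,
             t • q1.2.2 + (1 - t) • q2.2.2) := rfl
        _ = p := by rw [hx, hy, hz]
    have hqe := hext hq1 hq2mem hseg
    have h1 : q1.2.2 0 = (1:ℝ) := by simp [q1, z1]
    have h2 : q1.2.2 0 = t := by rw [hqe]
    rw [h1] at h2
    exact hne1 h2.symm
  intro k
  have hk : k = 0 ∨ k = 1 := by fin_cases k <;> simp
  rcases hk with rfl | rfl
  · exact key
  · rcases key with h | h
    · right; linarith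
    · left; linarith
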